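/- arXiv:1901.06853 — 3 statements merged into one kernel-verified Lean document; each statement's English description precedes it below -/
import Mathlib

section
/- Let M be a free abelian group and D(z) = Σ_{i≥0} D_i z^i a Hasse–Schmidt derivation on the exterior algebra ⋀M (i.e. D(z)(u∧v) = D(z)u ∧ D(z)v for all u,v ∈ ⋀M) with D_0 = id. Then the formal inverse of D(z) in End(⋀M)[[z]] exists and is again a Hasse–Schmidt derivation on ⋀M. -/
noncomputable section

namespace HSAux

variable {A : Type*} [Ring A]

/-- Recursive right inverse of a Hasse–Schmidt series. -/
def Einv (D : ℕ → Module.End ℤ A) : ℕ → Module.End ℤ A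
  | 0 => 1
  | n + 1 => -∑ j ∈ (Finset.range (n + 1)).attach,
      D (n + 1 - j.1) * Einv D j.1
  decreasing_by exact Finset.mem_range.mp j.2

/-- Recursive left inverse of a Hasse–Schmidt series. -/
def Einv' (D : ℕ → Module.End ℤ A) : ℕ → Module.End ℤ A
  | 0 => 1
  | n + 1 => -∑ j ∈ (Finset.range (n + 1)).attach,
      Einv' D j.1 * D (n + 1 - j.1)
  decreasing_by exact Finset.mem_range.mp j.2

lemma Einv_succ (D : ℕ → Module.End ℤ A) (n : ℕ) :
    Einv D (n + 1) = -∑ j ∈ Finset.range (n + 1), D (n + 1 - j) * Einv D j := by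
  rw [Einv, ← Finset.sum_attach (Finset.range (n+1)) (fun j => D (n + 1 - j) * Einv D j)]

lemma Einv'_succ (D : ℕ → Module.End ℤ A) (n : ℕ) :
    Einv' D (n + 1) = -∑ j ∈ Finset.range (n + 1), Einv' D j * D (n + 1 - j) := by
  rw [Einv', ← Finset.sum_attach (Finset.range (n+1)) (fun j => Einv' D j * D (n + 1 - j))]

lemma hDE (D : ℕ → Module.End ℤ A) (h0 : D 0 = 1) (n : ℕ) :
    (∑ j ∈ Finset.range (n + 1), D j * Einv D (n - j)) = if n = 0 then 1 else 0 := by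
  cases n with
  | zero => simp [h0, Einv]
  | succ n =>
    rw [Finset.sum_range_succ', if_neg (Nat.succ_ne_zero n)]
    simp only [Nat.succ_sub_succ]
    have : ∑ i ∈ Finset.range (n + 1), D (i + 1) * Einv D (n - i)
        = ∑ j ∈ Finset.range (n + 1), D (n + 1 - j) * Einv D j := by
      rw [← Finset.sum_range_reflect]
      apply Finset.sum_congr rfl
      intro i hi
      have hi' := Finset.mem_range.mp hi
      congr 2 <;> omega
    rw [this, h0, Nat.sub_zero, Einv_succ]
    simp

lemma hE'D (D : ℕ → Module.End ℤ A) (h0 : D 0 = 1) (n : ℕ) :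
    (∑ j ∈ Finset.range (n + 1), Einv' D j * D (n - j)) = if n = 0 then 1 else 0 := by
  cases n with
  | zero => simp [h0, Einv']
  | succ n =>
    rw [Finset.sum_range_succ, if_neg (Nat.succ_ne_zero n), Nat.sub_self, h0, Einv'_succ]
    simp

/-- Uniqueness of one-sided inverses of power series (coefficientwise). -/
lemma ps_eq {R : Type*} [Ring R] (D E E' : ℕ → R)
    (hDE : ∀ n, (∑ j ∈ Finset.range (n + 1), D j * E (n - j)) = if n = 0 then 1 else 0)
    (hE'D : ∀ n, (∑ j ∈ Finset.range (n + 1), E' j * D (n - j)) = if n = 0 then 1 else 0) :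
    E' = E := by
  have h1 : PowerSeries.mk D * PowerSeries.mk E = 1 := by
    ext n
    rw [PowerSeries.coeff_mul, Finset.Nat.sum_antidiagonal_eq_sum_range_succ_mk]
    simpa [PowerSeries.coeff_one] using hDE n
  have h2 : PowerSeries.mk E' * PowerSeries.mk D = 1 := by
    ext n
    rw [PowerSeries.coeff_mul, Finset.Nat.sum_antidiagonal_eq_sum_range_succ_mk]
    simpa [PowerSeries.coeff_one] using hE'D n
  have := left_inv_eq_right_inv h2 h1
  funext n
  simpa using congrArg (PowerSeries.coeff n) this

/-- Regrouping of a quadruple convolution sum. -/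
lemma quad (n : ℕ) (F G : ℕ → ℕ → A) :
    (∑ bm ∈ Finset.HasAntidiagonal.antidiagonal n, ∑ pq ∈ Finset.HasAntidiagonal.antidiagonal bm.1,
      ∑ ce ∈ Finset.HasAntidiagonal.antidiagonal bm.2, F ce.1 pq.1 * G ce.2 pq.2)
    = ∑ st ∈ Finset.HasAntidiagonal.antidiagonal n,
        (∑ cp ∈ Finset.HasAntidiagonal.antidiagonal st.1, F cp.1 cp.2) *
        (∑ eq' ∈ Finset.HasAntidiagonal.antidiagonal st.2, G eq'.1 eq'.2) := by
  simp only [Finset.sum_mul_sum, Finset.sum_sigma']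
  refine Finset.sum_nbij'
    (fun x => ⟨(x.2.2.1 + x.2.1.1, x.2.2.2 + x.2.1.2), ⟨(x.2.2.1, x.2.1.1), (x.2.2.2, x.2.1.2)⟩⟩)
    (fun y => ⟨(y.2.1.2 + y.2.2.2, y.2.1.1 + y.2.2.1), ⟨(y.2.1.2, y.2.2.2), (y.2.1.1, y.2.2.1)⟩⟩)
    ?_ ?_ ?_ ?_ ?_
  · rintro ⟨⟨b, m⟩, ⟨p, q⟩, ⟨c, e⟩⟩ hx
    simp only [Finset.mem_sigma, Finset.HasAntidiagonal.mem_antidiagonal, and_true, true_and] at hx ⊢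
    omega
  · rintro ⟨⟨s, t⟩, ⟨c, p⟩, ⟨e, q⟩⟩ hy
    simp only [Finset.mem_sigma, Finset.HasAntidiagonal.mem_antidiagonal, and_true, true_and] at hy ⊢
    omega
  · rintro ⟨⟨b, m⟩, ⟨p, q⟩, ⟨c, e⟩⟩ hx
    simp only [Finset.mem_sigma, Finset.HasAntidiagonal.mem_antidiagonal, and_true, true_and] at hx
    simp only [Sigma.mk.inj_iff, Prod.mk.injEq, heq_eq_eq, and_true, true_and]
    omega
  · rintro ⟨⟨s, t⟩, ⟨c, p⟩, ⟨e, q⟩⟩ hy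
    simp only [Finset.mem_sigma, Finset.HasAntidiagonal.mem_antidiagonal, and_true, true_and] at hy
    simp only [Sigma.mk.inj_iff, Prod.mk.injEq, heq_eq_eq, and_true, true_and]
    omega
  · rintro ⟨⟨b, m⟩, ⟨p, q⟩, ⟨c, e⟩⟩ _
    rfl

/-- The inverse of a Hasse–Schmidt derivation is a Hasse–Schmidt derivation. -/
lemma hs_inv (D E : ℕ → Module.End ℤ A)
    (hD : ∀ (n : ℕ) (u w : A), D n (u * w) = ∑ j ∈ Finset.range (n + 1), D j u * D (n - j) w)
    (h0 : D 0 = 1)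
    (hED : ∀ n : ℕ, (∑ j ∈ Finset.range (n + 1), E j * D (n - j)) = if n = 0 then 1 else 0) :
    ∀ (n : ℕ) (u w : A), E n (u * w) = ∑ j ∈ Finset.range (n + 1), E j u * E (n - j) w := by
  -- elementwise form of E ∘ D = δ, antidiagonal version
  have keyA : ∀ (n : ℕ) (x : A),
      (∑ cp ∈ Finset.HasAntidiagonal.antidiagonal n, E cp.1 (D cp.2 x)) = if n = 0 then x else 0 := by
    intro n x
    have h1 := congrArg (fun (f : Module.End ℤ A) => f x) (hED n)
    simp only [LinearMap.coe_sum, Finset.sum_apply, Module.End.mul_apply] at h1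
    have h2 : (if n = 0 then (1 : Module.End ℤ A) else 0) x = if n = 0 then x else 0 := by
      split_ifs <;> simp
    rw [Finset.Nat.sum_antidiagonal_eq_sum_range_succ_mk]
    exact h1.trans h2
  -- antidiagonal form of hD
  have hDa : ∀ (n : ℕ) (u w : A),
      D n (u * w) = ∑ pq ∈ Finset.HasAntidiagonal.antidiagonal n, D pq.1 u * D pq.2 w := by
    intro n u w
    rw [Finset.Nat.sum_antidiagonal_eq_sum_range_succ_mk]
    exact hD n u w
  intro n
  induction n using Nat.strong_induction_on with
  | _ n IH =>
  intro u w
  have IHa : ∀ j < n, ∀ (x y : A),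
      E j (x * y) = ∑ ce ∈ Finset.HasAntidiagonal.antidiagonal j, E ce.1 x * E ce.2 y := by
    intro j hj x y
    rw [Finset.Nat.sum_antidiagonal_eq_sum_range_succ_mk]
    exact IH j hj x y
  set term : ℕ × ℕ → ℕ × ℕ → A := fun pq ce => E ce.1 (D pq.1 u) * E ce.2 (D pq.2 w)
    with hterm
  set T : A := ∑ ce ∈ Finset.HasAntidiagonal.antidiagonal n, E ce.1 u * E ce.2 w with hT
  set R : A := ∑ j ∈ Finset.range n, E j (D (n - j) (u * w)) with hR
  set S : A := ∑ bm ∈ Finset.HasAntidiagonal.antidiagonal n, ∑ pq ∈ Finset.HasAntidiagonal.antidiagonal bm.1,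
      ∑ ce ∈ Finset.HasAntidiagonal.antidiagonal bm.2, term pq ce with hS
  -- step 1 : E n (u*w) = δ - R
  have h1 : E n (u * w) = (if n = 0 then u * w else 0) - R := by
    have h := keyA n (u * w)
    rw [Finset.Nat.sum_antidiagonal_eq_sum_range_succ_mk, Finset.sum_range_succ,
      Nat.sub_self, h0] at h
    simp only [Module.End.one_apply] at h
    exact eq_sub_of_add_eq' h
  -- S = δ
  have hSd : S = if n = 0 then u * w else 0 := by
    rw [hS, quad n (fun c p => E c (D p u)) (fun e q => E e (D q w))]
    have hc : ∀ st ∈ Finset.HasAntidiagonal.antidiagonal n,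
        (∑ cp ∈ Finset.HasAntidiagonal.antidiagonal st.1, E cp.1 (D cp.2 u)) *
        (∑ eq' ∈ Finset.HasAntidiagonal.antidiagonal st.2, E eq'.1 (D eq'.2 w))
        = (if st.1 = 0 then u else 0) * (if st.2 = 0 then w else 0) := by
      intro st _
      rw [keyA st.1 u, keyA st.2 w]
    rw [Finset.sum_congr rfl hc]
    rcases Nat.eq_zero_or_pos n with hn | hn
    · subst hn; simp
    · rw [if_neg (by omega)]
      apply Finset.sum_eq_zero
      intro st hst
      rw [Finset.HasAntidiagonal.mem_antidiagonal] at hst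
      rcases eq_or_ne st.1 0 with h' | h'
      · rw [if_neg (show st.2 ≠ 0 by omega), mul_zero]
      · rw [if_neg h', zero_mul]
  -- R in quadruple-sum form
  have hRq : ∀ j ∈ Finset.range n, E j (D (n - j) (u * w))
      = ∑ pq ∈ Finset.HasAntidiagonal.antidiagonal (n - j), ∑ ce ∈ Finset.HasAntidiagonal.antidiagonal j, term pq ce := by
    intro j hj
    rw [hDa (n - j) u w, map_sum]
    exact Finset.sum_congr rfl fun pq _ => IHa j (Finset.mem_range.mp hj) _ _
  -- S = R + T
  have hSRT : S = R + T := by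
    rw [hS, Finset.Nat.sum_antidiagonal_eq_sum_range_succ_mk, Finset.sum_range_succ']
    congr 1
    · rw [hR, Finset.sum_congr rfl hRq]
      rw [← Finset.sum_range_reflect (fun j => ∑ pq ∈ Finset.HasAntidiagonal.antidiagonal (n - j),
            ∑ ce ∈ Finset.HasAntidiagonal.antidiagonal j, term pq ce) n]
      apply Finset.sum_congr rfl
      intro i hi
      have hi' := Finset.mem_range.mp hi
      have e1 : n - (n - 1 - i) = i + 1 := by omega
      have e2 : n - 1 - i = n - (i + 1) := by omega
      have e3 : n - (n - (i + 1)) = i + 1 := by omega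
      simp only [e1, e2, e3]
    · rw [hT]
      simp only [Nat.sub_zero, Finset.Nat.antidiagonal_zero, Finset.sum_singleton, hterm, h0,
        Module.End.one_apply]
  -- conclude
  have hfin : E n (u * w) = T := by
    rw [h1, ← hSd, hSRT]
    abel
  rw [hfin, hT, Finset.Nat.sum_antidiagonal_eq_sum_range_succ_mk]

end HSAux

/-- `D` is a Hasse–Schmidt derivation on `⋀M`, given coefficientwise:
`D n (u ∧ v) = ∑_{j≤n} D j u ∧ D (n-j) v`. -/
def IsHS {M : Type*} [AddCommGroup M] [Module ℤ M]
    (D : ℕ → Module.End ℤ (ExteriorAlgebra ℤ M)) : Prop :=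
  ∀ (n : ℕ) (u w : ExteriorAlgebra ℤ M),
    D n (u * w) = ∑ j ∈ Finset.range (n + 1), D j u * D (n - j) w

/-- If `D(z)` is a Hasse–Schmidt derivation on `⋀M` with `D₀ = id`, then its formal
inverse in `End(⋀M)[[z]]` (with respect to the Cauchy product) exists and is again a
Hasse–Schmidt derivation. -/
theorem stmt0 {M : Type*} [AddCommGroup M] [Module ℤ M] [Module.Free ℤ M]
    (D : ℕ → Module.End ℤ (ExteriorAlgebra ℤ M)) (hD : IsHS D) (h0 : D 0 = 1) :
    ∃ E : ℕ → Module.End ℤ (ExteriorAlgebra ℤ M), IsHS E ∧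
      (∀ n : ℕ, (∑ j ∈ Finset.range (n + 1), D j * E (n - j)) =
        if n = 0 then 1 else 0) ∧
      (∀ n : ℕ, (∑ j ∈ Finset.range (n + 1), E j * D (n - j)) =
        if n = 0 then 1 else 0) := by
  refine ⟨HSAux.Einv D, ?_, fun n => HSAux.hDE D h0 n, ?_⟩
  · have hED : ∀ n : ℕ, (∑ j ∈ Finset.range (n + 1), HSAux.Einv D j * D (n - j)) =
        if n = 0 then 1 else 0 := by
      have hE := HSAux.ps_eq D (HSAux.Einv D) (HSAux.Einv' D)
        (HSAux.hDE D h0) (HSAux.hE'D D h0)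
      intro n
      rw [← hE]
      exact HSAux.hE'D D h0 n
    exact HSAux.hs_inv D (HSAux.Einv D) hD h0 hED
  · have hE := HSAux.ps_eq D (HSAux.Einv D) (HSAux.Einv' D)
      (HSAux.hDE D h0) (HSAux.hE'D D h0)
    intro n
    rw [← hE]
    exact HSAux.hE'D D h0 n
end
end

section
/- Let D(z) be a Hasse–Schmidt derivation on ⋀M with D_0 = id and inverse D̄(z). Then for all u, v ∈ ⋀M: u ∧ D̄(z)v = D̄(z)(D(z)u ∧ v). -/
noncomputable section

/-- Integration by parts: if `D(z)` is a Hasse–Schmidt derivation on `⋀M` with `D₀ = id`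
and `D̄(z) = E` is its formal inverse in `End(⋀M)[[z]]`, then
`u ∧ D̄(z)v = D̄(z)(D(z)u ∧ v)`, stated coefficientwise in `z^n`. -/
theorem stmt2 {M : Type*} [AddCommGroup M] [Module ℤ M] [Module.Free ℤ M]
    (D E : ℕ → Module.End ℤ (ExteriorAlgebra ℤ M)) (hD : IsHS D) (h0 : D 0 = 1)
    (hInv₁ : ∀ n : ℕ, (∑ j ∈ Finset.range (n + 1), D j * E (n - j)) =
      if n = 0 then 1 else 0)
    (hInv₂ : ∀ n : ℕ, (∑ j ∈ Finset.range (n + 1), E j * D (n - j)) =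
      if n = 0 then 1 else 0) :
    ∀ (n : ℕ) (u v : ExteriorAlgebra ℤ M),
      u * E n v = ∑ j ∈ Finset.range (n + 1), E j (D (n - j) u * v) := by
  intro n u v
  have h1 : PowerSeries.mk D * PowerSeries.mk E = 1 := by
    apply PowerSeries.ext
    intro m
    rw [PowerSeries.coeff_mul, Finset.Nat.sum_antidiagonal_eq_sum_range_succ_mk]
    simpa [PowerSeries.coeff_one] using hInv₁ m
  have h2 : PowerSeries.mk E * PowerSeries.mk D = 1 := by
    apply PowerSeries.ext
    intro m
    rw [PowerSeries.coeff_mul, Finset.Nat.sum_antidiagonal_eq_sum_range_succ_mk]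
    simpa [PowerSeries.coeff_one] using hInv₂ m
  have hHS : PowerSeries.mk D *
      PowerSeries.C (R := Module.End ℤ (ExteriorAlgebra ℤ M)) (LinearMap.mulLeft ℤ u) =
      PowerSeries.mk (fun j => LinearMap.mulLeft ℤ (D j u)) * PowerSeries.mk D := by
    apply PowerSeries.ext
    intro m
    rw [PowerSeries.coeff_mul_C, PowerSeries.coeff_mul,
      Finset.Nat.sum_antidiagonal_eq_sum_range_succ_mk]
    refine LinearMap.ext fun w => ?_
    simp only [PowerSeries.coeff_mk, Module.End.mul_apply, LinearMap.mulLeft_apply,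
      LinearMap.sum_apply, Finset.sum_apply]
    exact hD m u w
  have key : PowerSeries.C (R := Module.End ℤ (ExteriorAlgebra ℤ M)) (LinearMap.mulLeft ℤ u) *
      PowerSeries.mk E =
      PowerSeries.mk E * PowerSeries.mk (fun j => LinearMap.mulLeft ℤ (D j u)) := by
    calc PowerSeries.C (LinearMap.mulLeft ℤ u) * PowerSeries.mk E
        = PowerSeries.mk E * PowerSeries.mk D *
            PowerSeries.C (LinearMap.mulLeft ℤ u) * PowerSeries.mk E := by
          rw [h2, one_mul]
      _ = PowerSeries.mk E * (PowerSeries.mk D * PowerSeries.C (LinearMap.mulLeft ℤ u)) *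
            PowerSeries.mk E := by
          rw [mul_assoc (PowerSeries.mk E)]
      _ = PowerSeries.mk E * (PowerSeries.mk (fun j => LinearMap.mulLeft ℤ (D j u)) *
            PowerSeries.mk D) * PowerSeries.mk E := by rw [hHS]
      _ = PowerSeries.mk E * PowerSeries.mk (fun j => LinearMap.mulLeft ℤ (D j u)) *
            (PowerSeries.mk D * PowerSeries.mk E) := by
          rw [mul_assoc, mul_assoc, mul_assoc]
      _ = PowerSeries.mk E * PowerSeries.mk (fun j => LinearMap.mulLeft ℤ (D j u)) := by
          rw [h1, mul_one]
  have hc := congrArg (fun f => (PowerSeries.coeff n f) v) key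
  rw [PowerSeries.coeff_C_mul, PowerSeries.coeff_mul,
    Finset.Nat.sum_antidiagonal_eq_sum_range_succ_mk] at hc
  simpa [PowerSeries.coeff_mk, Module.End.mul_apply] using hc
end
end

section
/- Let σ_i ∈ End_ℤ(⋀M) (i ∈ ℤ) be the coefficients of the Schubert derivations, determined by σ_i b_k = b_{k+i} and the Hasse–Schmidt/Leibniz property. Then σ_i and σ_j commute on all of ⋀M: σ_i σ_j = σ_j σ_i for all i, j ∈ ℤ. -/
open ExteriorAlgebra

noncomputable section

abbrev M : Type := ℤ →₀ ℤ
def b (i : ℤ) : M := Finsupp.single i 1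
abbrev A : Type := ExteriorAlgebra ℤ M

/-- The coefficients `σᵢ` (`i ∈ ℤ`) of the Schubert derivations `σ₊(z)` and `σ₋(z)`
on `⋀M`, determined by `σᵢ bₖ = b_{k+i}`, `σ₀ = id` and the Hasse–Schmidt/Leibniz
property in each direction, commute pairwise on all of `⋀M`. -/
theorem stmt5 (S : ℤ → Module.End ℤ A)
    (h0 : S 0 = 1)
    (hb : ∀ i k : ℤ, S i (ι ℤ (b k)) = ι ℤ (b (k + i)))
    (hplus : ∀ (i : ℕ) (u w : A),
      S i (u * w) = ∑ j ∈ Finset.range (i + 1), S j u * S ((i : ℤ) - j) w)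
    (hminus : ∀ (i : ℕ) (u w : A),
      S (-(i : ℤ)) (u * w) =
        ∑ j ∈ Finset.range (i + 1), S (-(j : ℤ)) u * S (-((i : ℤ) - j)) w) :
    ∀ i j : ℤ, S i * S j = S j * S i := by
  have S0 : ∀ x : A, S 0 x = x := fun x => by rw [h0]; rfl
  -- uniform Leibniz expansion
  have expand : ∀ (i : ℤ) (u w : A), S i (u * w) =
      ∑ a ∈ Finset.range (i.natAbs + 1), S (i.sign * a) u * S (i - i.sign * a) w := by
    intro i u w
    rcases lt_trichotomy i 0 with hneg | rfl | hpos
    · have key := hminus i.natAbs u w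
      rw [show -((i.natAbs : ℤ)) = i by omega] at key
      rw [key]
      refine Finset.sum_congr rfl fun a _ => ?_
      rw [show i.sign * (a : ℤ) = -(a : ℤ) by rw [Int.sign_eq_neg_one_iff_neg.mpr hneg]; ring,
        show i - -(a : ℤ) = -(((i.natAbs : ℤ)) - a) by omega]
    · have key := hplus 0 u w
      simpa using key
    · have key := hplus i.natAbs u w
      rw [show ((i.natAbs : ℤ)) = i by omega] at key
      rw [key]
      refine Finset.sum_congr rfl fun a _ => ?_
      rw [show i.sign * (a : ℤ) = (a : ℤ) by rw [Int.sign_eq_one_iff_pos.mpr hpos]; ring]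
  -- S i kills 1 for i ≠ 0
  have pos1 : ∀ n : ℕ, S ((n : ℤ) + 1) (1 : A) = 0 := by
    intro n
    induction n using Nat.strong_induction_on with
    | _ n ih =>
      have h := hplus (n + 1) (1 : A) (1 : A)
      rw [one_mul, Finset.sum_range_succ', Finset.sum_range_succ] at h
      push_cast at h
      have hmid : ∀ j ∈ Finset.range n,
          S ((j : ℤ) + 1) (1 : A) * S (((n : ℤ) + 1) - ((j : ℤ) + 1)) (1 : A) = 0 := by
        intro j hj
        rw [show S ((j : ℤ) + 1) (1 : A) = 0 from ih j (Finset.mem_range.mp hj), zero_mul]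
      rw [Finset.sum_eq_zero hmid] at h
      simp only [sub_zero, sub_self, S0, mul_one, one_mul, zero_add] at h
      exact right_eq_add.mp h
  have neg1 : ∀ n : ℕ, S (-((n : ℤ) + 1)) (1 : A) = 0 := by
    intro n
    induction n using Nat.strong_induction_on with
    | _ n ih =>
      have h := hminus (n + 1) (1 : A) (1 : A)
      rw [one_mul, Finset.sum_range_succ', Finset.sum_range_succ] at h
      push_cast at h
      have hmid : ∀ j ∈ Finset.range n,
          S (-((j : ℤ) + 1)) (1 : A) * S (-(((n : ℤ) + 1) - ((j : ℤ) + 1))) (1 : A) = 0 := by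
        intro j hj
        rw [show S (-((j : ℤ) + 1)) (1 : A) = 0 from ih j (Finset.mem_range.mp hj), zero_mul]
      rw [Finset.sum_eq_zero hmid] at h
      simp only [neg_zero, sub_zero, sub_self, S0, mul_one, one_mul, zero_add] at h
      exact right_eq_add.mp h
  have Sone : ∀ i : ℤ, i ≠ 0 → S i (1 : A) = 0 := by
    intro i hi
    rcases lt_trichotomy i 0 with h | h | h
    · have := neg1 (i.natAbs - 1)
      rwa [show -(((i.natAbs - 1 : ℕ) : ℤ) + 1) = i by omega] at this
    · exact absurd h hi
    · have := pos1 (i.natAbs - 1)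
      rwa [show (((i.natAbs - 1 : ℕ) : ℤ) + 1) = i by omega] at this
  -- pointwise commutation
  have main : ∀ x : A, ∀ i j : ℤ, S i (S j x) = S j (S i x) := by
    intro x
    induction x using ExteriorAlgebra.induction with
    | algebraMap r =>
      intro i j
      rw [Algebra.algebraMap_eq_smul_one, map_smul, map_smul, map_smul, map_smul]
      congr 1
      by_cases hj : j = 0
      · subst hj; rw [S0, S0]
      by_cases hi : i = 0
      · subst hi; rw [S0, S0]
      rw [Sone j hj, Sone i hi, map_zero, map_zero]
    | ι m =>
      induction m using Finsupp.induction_linear with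
      | zero => intro i j; simp
      | add f g hf hg => intro i j; simp only [map_add, hf, hg]
      | single k c =>
        intro i j
        have hkc : (Finsupp.single k c : M) = c • b k := by
          rw [b, Finsupp.smul_single, smul_eq_mul, mul_one]
        rw [hkc]
        simp only [map_smul, hb]
        rw [show k + j + i = k + i + j by ring]
    | mul u w hu hw =>
      intro i j
      calc S i (S j (u * w))
          = S i (∑ c ∈ Finset.range (j.natAbs + 1),
              S (j.sign * c) u * S (j - j.sign * c) w) := by rw [expand j]
        _ = ∑ c ∈ Finset.range (j.natAbs + 1),
              S i (S (j.sign * c) u * S (j - j.sign * c) w) := map_sum _ _ _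
        _ = ∑ c ∈ Finset.range (j.natAbs + 1), ∑ a ∈ Finset.range (i.natAbs + 1),
              S (i.sign * a) (S (j.sign * c) u) *
                S (i - i.sign * a) (S (j - j.sign * c) w) :=
            Finset.sum_congr rfl fun c _ => expand i _ _
        _ = ∑ a ∈ Finset.range (i.natAbs + 1), ∑ c ∈ Finset.range (j.natAbs + 1),
              S (i.sign * a) (S (j.sign * c) u) *
                S (i - i.sign * a) (S (j - j.sign * c) w) := Finset.sum_comm
        _ = ∑ a ∈ Finset.range (i.natAbs + 1), ∑ c ∈ Finset.range (j.natAbs + 1),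
              S (j.sign * c) (S (i.sign * a) u) *
                S (j - j.sign * c) (S (i - i.sign * a) w) :=
            Finset.sum_congr rfl fun a _ => Finset.sum_congr rfl fun c _ => by
              rw [hu, hw]
        _ = ∑ a ∈ Finset.range (i.natAbs + 1),
              S j (S (i.sign * a) u * S (i - i.sign * a) w) :=
            Finset.sum_congr rfl fun a _ => (expand j _ _).symm
        _ = S j (∑ a ∈ Finset.range (i.natAbs + 1),
              S (i.sign * a) u * S (i - i.sign * a) w) := (map_sum _ _ _).symm
        _ = S j (S i (u * w)) := by rw [← expand i]
    | add u w hu hw =>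
      intro i j
      simp only [map_add, hu, hw]
  intro i j
  exact LinearMap.ext fun x => main x i j
end
end
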